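/- Let X and Y be complex Banach spaces, A ∈ B(X), B ∈ B(Y), C ∈ B(Y, X), and let M_C ∈ B(X ⊕ Y) be the upper-triangular operator matrix M_C(x, y) = (Ax + Cy, By). Then σ_des(M_C) ∪ S(B) = σ_des(A) ∪ σ_des(B) ∪ S(B), where σ_des denotes the descent spectrum and S(B) the set of points where B fails to have the single valued extension property. -/

import Mathlib

noncomputable section

open ContinuousLinearMap Metric Set

variable {E : Type*} [NormedAddCommGroup E] [NormedSpace ℂ E]
variable {X Y : Type*} [NormedAddCommGroup X] [NormedSpace ℂ X] [CompleteSpace X]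
  [NormedAddCommGroup Y] [NormedSpace ℂ Y] [CompleteSpace Y]

/-- `T` has finite descent: some power has the same range as the next one. -/
def HasFiniteDescent (T : E →L[ℂ] E) : Prop :=
  ∃ k : ℕ, LinearMap.range ((T ^ k : E →L[ℂ] E) : E →ₗ[ℂ] E) =
    LinearMap.range ((T ^ (k + 1) : E →L[ℂ] E) : E →ₗ[ℂ] E)

/-- The descent spectrum. -/
def descentSpectrum (T : E →L[ℂ] E) : Set ℂ :=
  {z | ¬ HasFiniteDescent (T - z • 1)}

/-- `T` has the single valued extension property at `z₀`. -/
def HasSVEPAt (T : E →L[ℂ] E) (z₀ : ℂ) : Prop :=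
  ∃ r > (0 : ℝ), ∀ V : Set ℂ, V ⊆ ball z₀ r → IsOpen V →
    ∀ f : ℂ → E, AnalyticOnNhd ℂ f V → (∀ z ∈ V, (T - z • 1) (f z) = 0) →
      ∀ z ∈ V, f z = 0

/-- `S(T)`: the set of points where `T` fails to have the SVEP. -/
def svepFail (T : E →L[ℂ] E) : Set ℂ :=
  {z | ¬ HasSVEPAt T z}

/-- The upper-triangular operator matrix `M_C (x, y) = (A x + C y, B y)` on `X ⊕ Y`. -/
def ucMat (A : X →L[ℂ] X) (B : Y →L[ℂ] Y) (C : Y →L[ℂ] X) :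
    (X × Y) →L[ℂ] (X × Y) :=
  (A.comp (ContinuousLinearMap.fst ℂ X Y) + C.comp (ContinuousLinearMap.snd ℂ X Y)).prod
    (B.comp (ContinuousLinearMap.snd ℂ X Y))


set_option linter.unusedSectionVars false
set_option maxHeartbeats 1000000





lemma ucMat_apply (A : X →L[ℂ] X) (B : Y →L[ℂ] Y) (C : Y →L[ℂ] X) (v : X × Y) :
    ucMat A B C v = (A v.1 + C v.2, B v.2) := rfl

lemma ucMat_mul (A A' : X →L[ℂ] X) (B B' : Y →L[ℂ] Y) (C C' : Y →L[ℂ] X) :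
    ucMat A B C * ucMat A' B' C' = ucMat (A * A') (B * B') (A.comp C' + C.comp B') := by
  ext v <;> simp [ucMat_apply, mul_apply, add_add_add_comm]

lemma one_eq_ucMat : (1 : (X × Y) →L[ℂ] (X × Y)) = ucMat 1 1 0 := by
  ext v <;> simp [ucMat_apply]

lemma ucMat_inj3 {A₁ A₂ : X →L[ℂ] X} {B₁ B₂ : Y →L[ℂ] Y} {C₁ C₂ : Y →L[ℂ] X}
    (h : ucMat A₁ B₁ C₁ = ucMat A₂ B₂ C₂) : C₁ = C₂ := by
  ext y
  have := congrArg (fun f => (f (0, y)).1) h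
  simpa [ucMat_apply] using this

def ucD (A : X →L[ℂ] X) (B : Y →L[ℂ] Y) (C : Y →L[ℂ] X) : ℕ → (Y →L[ℂ] X)
  | 0 => 0
  | n + 1 => A.comp (ucD A B C n) + C.comp (B ^ n)

lemma ucMat_pow (A : X →L[ℂ] X) (B : Y →L[ℂ] Y) (C : Y →L[ℂ] X) (n : ℕ) :
    (ucMat A B C) ^ n = ucMat (A ^ n) (B ^ n) (ucD A B C n) := by
  induction n with
  | zero => simpa [ucD] using one_eq_ucMat
  | succ n ih =>
    rw [pow_succ', ih, ucMat_mul, ← pow_succ', ← pow_succ']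
    rfl

lemma ucD_split (A : X →L[ℂ] X) (B : Y →L[ℂ] Y) (C : Y →L[ℂ] X) (m k : ℕ) :
    ucD A B C (m + k) = (A ^ m).comp (ucD A B C k) + (ucD A B C m).comp (B ^ k) := by
  have h : (ucMat A B C) ^ (m + k) = (ucMat A B C) ^ m * (ucMat A B C) ^ k := pow_add _ _ _
  rw [ucMat_pow, ucMat_pow, ucMat_pow, ucMat_mul] at h
  exact ucMat_inj3 h

lemma ucMat_pow_apply (A : X →L[ℂ] X) (B : Y →L[ℂ] Y) (C : Y →L[ℂ] X) (n : ℕ) (v : X × Y) :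
    ((ucMat A B C) ^ n) v = ((A ^ n) v.1 + (ucD A B C n) v.2, (B ^ n) v.2) := by
  rw [ucMat_pow, ucMat_apply]

lemma clm_range_mul (T S : E →L[ℂ] E) :
    LinearMap.range (T * S).toLinearMap = (LinearMap.range S.toLinearMap).map (T : E →ₗ[ℂ] E) := by
  ext u
  simp only [LinearMap.mem_range, Submodule.mem_map, mul_apply]
  constructor
  · rintro ⟨x, h⟩; exact ⟨S x, ⟨x, rfl⟩, h⟩
  · rintro ⟨y, ⟨x, hx⟩, h⟩; exact ⟨x, by rw [← h, ← hx]; rfl⟩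

lemma stab_step (T : E →L[ℂ] E) {k : ℕ}
    (h : LinearMap.range (T ^ k).toLinearMap = LinearMap.range (T ^ (k + 1)).toLinearMap) (j : ℕ) :
    LinearMap.range (T ^ (k + j)).toLinearMap = LinearMap.range (T ^ (k + j + 1)).toLinearMap := by
  have e1 : T ^ (k + j) = T ^ j * T ^ k := by rw [add_comm k j, pow_add]
  have e2 : T ^ (k + j + 1) = T ^ j * T ^ (k + 1) := by
    rw [show k + j + 1 = j + (k + 1) by ring, pow_add]
  rw [e1, e2, clm_range_mul, clm_range_mul, h]

lemma stab_ge (T : E →L[ℂ] E) {k : ℕ}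
    (h : LinearMap.range (T ^ k).toLinearMap = LinearMap.range (T ^ (k + 1)).toLinearMap) (j : ℕ) :
    LinearMap.range (T ^ (k + j)).toLinearMap = LinearMap.range (T ^ k).toLinearMap := by
  induction j with
  | zero => rfl
  | succ j ih => exact (stab_step T h j).symm.trans ih

lemma range_pow_succ_le (T : E →L[ℂ] E) (n : ℕ) :
    LinearMap.range (T ^ (n + 1)).toLinearMap ≤ LinearMap.range (T ^ n).toLinearMap := by
  rw [pow_succ, clm_range_mul]
  exact LinearMap.map_le_range

/-- descent(B) ≤ descent(M_C) -/
lemma descent_B_le (A : X →L[ℂ] X) (B : Y →L[ℂ] Y) (C : Y →L[ℂ] X) {k : ℕ}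
    (h : LinearMap.range ((ucMat A B C) ^ k).toLinearMap = LinearMap.range ((ucMat A B C) ^ (k + 1)).toLinearMap) :
    LinearMap.range (B ^ k).toLinearMap = LinearMap.range (B ^ (k + 1)).toLinearMap := by
  refine le_antisymm ?_ (range_pow_succ_le B k)
  rintro u ⟨y, rfl⟩
  have h1 : ((ucMat A B C) ^ k) (0, y) ∈ LinearMap.range ((ucMat A B C) ^ (k + 1)).toLinearMap := by
    rw [← h]; exact ⟨(0, y), rfl⟩
  obtain ⟨w, hw : ((ucMat A B C) ^ (k + 1)) w = _⟩ := h1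
  have := congrArg Prod.snd hw
  rw [ucMat_pow_apply, ucMat_pow_apply] at this
  exact ⟨w.2, this⟩

/-- descent(M_C) ≤ descent(A) + descent(B), essentially. -/
lemma descent_M_finite (A : X →L[ℂ] X) (B : Y →L[ℂ] Y) (C : Y →L[ℂ] X) {p q : ℕ}
    (hA : LinearMap.range (A ^ p).toLinearMap = LinearMap.range (A ^ (p + 1)).toLinearMap)
    (hB : LinearMap.range (B ^ q).toLinearMap = LinearMap.range (B ^ (q + 1)).toLinearMap) :
    HasFiniteDescent (ucMat A B C) := by
  set n := p + q with hn
  refine ⟨n, le_antisymm ?_ (range_pow_succ_le _ n)⟩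
  rintro u ⟨w, rfl⟩
  set x := w.1
  set y := w.2
  -- B^n y ∈ ran B^{n+1}
  have hBn : LinearMap.range (B ^ (n + 1)).toLinearMap = LinearMap.range (B ^ q).toLinearMap := by
    have := stab_ge B hB (p + 1)
    rwa [show q + (p + 1) = n + 1 by omega] at this
  have hBn' : LinearMap.range (B ^ n).toLinearMap = LinearMap.range (B ^ q).toLinearMap := by
    have := stab_ge B hB p
    rwa [show q + p = n by omega] at this
  have h1 : (B ^ n) y ∈ LinearMap.range (B ^ (n + 1)).toLinearMap := by
    rw [hBn, ← hBn']; exact ⟨y, rfl⟩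
  obtain ⟨y₁, hy₁ : (B ^ (n + 1)) y₁ = _⟩ := h1
  set z := y - B y₁ with hz
  have hzn : (B ^ n) z = 0 := by
    have : (B ^ n) (B y₁) = (B ^ (n + 1)) y₁ := by
      rw [pow_succ, mul_apply_eq_comp]
    rw [hz, map_sub, this, hy₁, sub_self]
  set t := (B ^ q) z with ht
  have htker : (B ^ p) t = 0 := by
    rw [ht, ← mul_apply_eq_comp, ← pow_add, show p + q = n from rfl, hzn]
  -- t ∈ ran B^{q+1}
  have h2 : t ∈ LinearMap.range (B ^ (q + 1)).toLinearMap := by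
    rw [← hB]; exact ⟨z, rfl⟩
  obtain ⟨s, hs : (B ^ (q + 1)) s = t⟩ := h2
  have hsker : (B ^ (n + 1)) s = 0 := by
    rw [show n + 1 = p + (q + 1) by omega, pow_add, mul_apply_eq_comp, hs, htker]
  -- ranges of A stabilize
  have hAn : LinearMap.range (A ^ (n + 1)).toLinearMap = LinearMap.range (A ^ p).toLinearMap := by
    have := stab_ge A hA (q + 1)
    rwa [show p + (q + 1) = n + 1 by omega] at this
  have hAn' : LinearMap.range (A ^ n).toLinearMap = LinearMap.range (A ^ p).toLinearMap := by
    have := stab_ge A hA q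
    rwa [show p + q = n from rfl] at this
  -- first range element : A^n (x - C y₁) ∈ ran A^{n+1}
  have e1 : (A ^ n) (x - C y₁) ∈ LinearMap.range (A ^ (n + 1)).toLinearMap := by
    rw [hAn, ← hAn']; exact ⟨x - C y₁, rfl⟩
  obtain ⟨xa, hxa : (A ^ (n + 1)) xa = _⟩ := e1
  -- second : A^p (ucD q z - ucD (q+1) s) ∈ ran A^{n+1}
  have e2 : (A ^ p) ((ucD A B C q) z - (ucD A B C (q + 1)) s) ∈ LinearMap.range (A ^ (n + 1)).toLinearMap := by
    rw [hAn]; exact ⟨_, rfl⟩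
  obtain ⟨xb, hxb : (A ^ (n + 1)) xb = _⟩ := e2
  refine ⟨(xa + xb, y₁ + s), ?_⟩
  have h2nd : (B ^ (n + 1)) (y₁ + s) = (B ^ n) y := by
    rw [map_add, hy₁, hsker, add_zero]
  -- identities for ucD
  have hsplit1 : (ucD A B C n) z = (A ^ p) ((ucD A B C q) z) + (ucD A B C p) t := by
    have := ucD_split A B C p q
    rw [show p + q = n from rfl] at this
    rw [this]; rfl
  have hsplit2 : (ucD A B C (n + 1)) s
      = (A ^ p) ((ucD A B C (q + 1)) s) + (ucD A B C p) t := by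
    have := ucD_split A B C p (q + 1)
    rw [show p + (q + 1) = n + 1 by omega] at this
    rw [this]
    simp only [ContinuousLinearMap.add_apply, coe_comp', Function.comp_apply, hs]
  have hDy : (ucD A B C n) (B y₁) = (ucD A B C (n + 1)) y₁ - (A ^ n) (C y₁) := by
    have := ucD_split A B C n 1
    rw [show n + 1 = n + 1 from rfl] at this
    have h1' : ucD A B C 1 = C := by
      show A.comp (ucD A B C 0) + C.comp (B ^ 0) = C
      ext y'; simp [ucD]
    rw [this, h1']
    simp only [ContinuousLinearMap.add_apply, coe_comp', Function.comp_apply, pow_one]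
    abel
  -- conclude
  simp only [ContinuousLinearMap.coe_coe]
  rw [ucMat_pow_apply, ucMat_pow_apply]
  have hy' : y = z + B y₁ := by rw [hz]; abel
  refine Prod.ext ?_ h2nd
  show (A ^ (n + 1)) (xa + xb) + (ucD A B C (n + 1)) (y₁ + s) = (A ^ n) x + (ucD A B C n) y
  rw [map_add, hxa, hxb, map_add, hsplit2]
  conv_rhs => rw [hy', map_add, hDy, hsplit1]
  rw [map_sub (A ^ p) ((ucD A B C q) z) ((ucD A B C (q + 1)) s),
    map_sub (A ^ n) x (C y₁)]
  abel



lemma omt (T : E →L[ℂ] E) [CompleteSpace E] {d : ℕ}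
    (h : LinearMap.range (T ^ d).toLinearMap = LinearMap.range (T ^ (d + 1)).toLinearMap) :
    ∃ c > (0 : ℝ), ∀ u : E, ∃ v, (T ^ (d + 1)) v = (T ^ d) u ∧ ‖v‖ ≤ c * ‖u‖ := by
  set f : (E × E) →L[ℂ] E :=
    (T ^ d).comp (ContinuousLinearMap.fst ℂ E E) -
      (T ^ (d + 1)).comp (ContinuousLinearMap.snd ℂ E E) with hf
  set G := LinearMap.ker f.toLinearMap with hG
  set π : G →L[ℂ] E := (ContinuousLinearMap.fst ℂ E E).comp G.subtypeL with hπ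
  have hsurj : Function.Surjective π := by
    intro u
    have h1 : (T ^ d) u ∈ LinearMap.range (T ^ (d + 1)).toLinearMap := h ▸ ⟨u, rfl⟩
    obtain ⟨v, hv : (T ^ (d + 1)) v = _⟩ := h1
    refine ⟨⟨(u, v), ?_⟩, rfl⟩
    have : f (u, v) = 0 := by
      simp [hf, hv, sub_eq_zero]
    exact this
  obtain ⟨c, hc, hC⟩ := exists_preimage_norm_le π hsurj
  refine ⟨c, hc, fun u => ?_⟩
  obtain ⟨g, hg1, hg2⟩ := hC u
  have hker : f (g : E × E) = 0 := g.2
  have h1 : (T ^ d) (g : E × E).1 - (T ^ (d + 1)) (g : E × E).2 = 0 := hker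
  have hgu : (g : E × E).1 = u := hg1
  refine ⟨(g : E × E).2, ?_, ?_⟩
  · rw [← hgu, eq_comm, ← sub_eq_zero]; exact h1
  · exact le_trans (norm_snd_le _) hg2




/-- Key step: a geometrically bounded backward orbit of `B - z₀` starting at `0`
has vanishing first term, whenever `B` has SVEP at `z₀`. -/
lemma svep_orbit_step (B : Y →L[ℂ] Y) (z₀ : ℂ) (hsv : HasSVEPAt B z₀)
    (v : ℕ → Y) (hv0 : v 0 = 0) (hrec : ∀ n, (B - z₀ • 1) (v (n + 1)) = v n)
    (K c : ℝ) (hc : 0 < c) (hbound : ∀ n, ‖v n‖ ≤ K * c ^ n) :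
    v 1 = 0 := by
  -- the power series  Σ v_{n+1} z^n
  set p : FormalMultilinearSeries ℂ ℂ Y :=
    fun n => ContinuousMultilinearMap.mkPiRing ℂ (Fin n) (v (n + 1)) with hp
  have hpn : ∀ (n : ℕ) (z : ℂ), (p n) (fun _ => z) = z ^ n • v (n + 1) := by
    intro n z
    rw [hp]
    simp [ContinuousMultilinearMap.mkPiRing_apply]
  have hpnorm : ∀ n, ‖p n‖ = ‖v (n + 1)‖ := fun n => by
    rw [hp]; exact ContinuousMultilinearMap.norm_mkPiRing _
  -- radius bound
  set r₀ : NNReal := Real.toNNReal c⁻¹ with hr₀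
  have hr₀c : (r₀ : ℝ) = c⁻¹ := Real.coe_toNNReal _ (by positivity)
  have hrad : (r₀ : ENNReal) ≤ p.radius := by
    apply p.le_radius_of_bound (K * c)
    intro n
    rw [hpnorm, hr₀c]
    calc ‖v (n + 1)‖ * (c⁻¹) ^ n ≤ (K * c ^ (n + 1)) * (c⁻¹) ^ n := by
          apply mul_le_mul_of_nonneg_right (hbound (n + 1)) (by positivity)
      _ = K * c := by
          rw [pow_succ, inv_pow, mul_comm (c ^ n) c, ← mul_assoc, mul_assoc,
            mul_inv_cancel₀ (pow_ne_zero _ hc.ne'), mul_one]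
  have hr₀pos : (0 : ENNReal) < r₀ := by
    rw [hr₀]
    simp only [ENNReal.coe_pos]
    exact Real.toNNReal_pos.mpr (by positivity)
  have hradpos : 0 < p.radius := lt_of_lt_of_le hr₀pos hrad
  have hball := p.hasFPowerSeriesOnBall hradpos
  -- SVEP data
  obtain ⟨r, hr, hsvep⟩ := hsv
  set ρ : ℝ := min r c⁻¹ with hρ
  have hρpos : 0 < ρ := lt_min hr (by positivity)
  set V : Set ℂ := ball z₀ ρ with hV
  have hVsub : V ⊆ ball z₀ r := ball_subset_ball (min_le_left _ _)
  have hVopen : IsOpen V := isOpen_ball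
  -- membership in the convergence ball
  have hmem : ∀ w ∈ V, (w - z₀) ∈ Metric.eball (0 : ℂ) p.radius := by
    intro w hw
    have hlt : ‖w - z₀‖ < c⁻¹ := by
      have := mem_ball_iff_norm.mp hw
      exact lt_of_lt_of_le this (min_le_right _ _)
    rw [Metric.mem_eball, edist_eq_enorm_sub, sub_zero, enorm_eq_nnnorm]
    refine lt_of_lt_of_le ?_ hrad
    rw [ENNReal.coe_lt_coe]
    rw [← NNReal.coe_lt_coe, hr₀c, coe_nnnorm]
    exact hlt
  set f : ℂ → Y := fun w => p.sum (w - z₀) with hfdef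
  -- analytic
  have hfan : AnalyticOnNhd ℂ f V := by
    intro w hw
    have h1 : AnalyticAt ℂ p.sum (w - z₀) :=
      hball.analyticOnNhd _ (hmem w hw)
    have h2 : AnalyticAt ℂ (fun w : ℂ => w - z₀) w := (analyticAt_id.sub analyticAt_const)
    have h3 := AnalyticAt.comp_of_eq h1 h2 rfl
    simpa [Function.comp_def] using h3
  -- the equation
  have hfeq : ∀ w ∈ V, (B - w • 1) (f w) = 0 := by
    intro w hw
    set z : ℂ := w - z₀ with hzdef
    have hsum : HasSum (fun n => z ^ n • v (n + 1)) (p.sum z) := by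
      have h0 : (fun n => z ^ n • v (n + 1)) = fun n => (p n) fun _ => z :=
        funext fun n => (hpn n z).symm
      rw [h0]
      exact p.hasSum (hmem w hw)
    have h1 : HasSum (fun n => z ^ n • v n) ((B - z₀ • 1) (p.sum z)) := by
      have hmap := (B - z₀ • 1).hasSum hsum
      have h0 : (fun n => z ^ n • v n) = fun n => (B - z₀ • 1) (z ^ n • v (n + 1)) :=
        funext fun n => by rw [map_smul, hrec]
      rw [h0]
      exact hmap
    have h2 : HasSum (fun n => z ^ (n + 1) • v (n + 1)) (z • p.sum z) := by
      have hs := hsum.const_smul z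
      have h0 : (fun n => z ^ (n + 1) • v (n + 1)) = fun n => z • (z ^ n • v (n + 1)) :=
        funext fun n => by rw [smul_smul, ← pow_succ']
      rw [h0]
      exact hs
    have h3 : HasSum (fun n => z ^ n • v n) (z • p.sum z) := by
      have := (hasSum_nat_add_iff (f := fun n => z ^ n • v n) 1).mp h2
      simpa [hv0] using this
    have h4 : (B - z₀ • 1) (p.sum z) = z • p.sum z := h1.unique h3
    have : (B - w • 1) (p.sum z) = (B - z₀ • 1) (p.sum z) - z • p.sum z := by
      simp only [ContinuousLinearMap.sub_apply, ContinuousLinearMap.smul_apply, ContinuousLinearMap.one_apply, hzdef]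
      rw [sub_smul]
      abel
    rw [hfdef]
    simp only []
    rw [this, h4, sub_self]
  -- conclude
  have hzero := hsvep V hVsub hVopen f hfan hfeq z₀ (mem_ball_self hρpos)
  -- f z₀ = p.sum 0 = v 1
  have hself : p.sum 0 = v 1 := by
    have hs : HasSum (fun n => (0 : ℂ) ^ n • v (n + 1)) (p.sum 0) := by
      have h0 : (0 : ℂ) ∈ Metric.eball (0 : ℂ) p.radius := by
        simp [hradpos]
      have h0' : (fun n => (0 : ℂ) ^ n • v (n + 1)) = fun n => (p n) fun _ => (0 : ℂ) :=
        funext fun n => (hpn n 0).symm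
      rw [h0']
      exact p.hasSum h0
    have hs2 : HasSum (fun n => (0 : ℂ) ^ n • v (n + 1)) (v 1) := by
      have := hasSum_single (f := fun n => (0 : ℂ) ^ n • v (n + 1)) 0 ?_
      · simpa using this
      · intro b hb
        simp [zero_pow hb]
    exact hs.unique hs2
  rw [← hself]
  have : f z₀ = p.sum 0 := by rw [hfdef]; simp
  rw [← this]
  exact hzero

lemma svep_orbit_all (B : Y →L[ℂ] Y) (z₀ : ℂ) (hsv : HasSVEPAt B z₀)
    (v : ℕ → Y) (hv0 : v 0 = 0) (hrec : ∀ n, (B - z₀ • 1) (v (n + 1)) = v n)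
    (K c : ℝ) (hc : 0 < c) (hbound : ∀ n, ‖v n‖ ≤ K * c ^ n) :
    ∀ n, v n = 0 := by
  intro n
  induction n with
  | zero => exact hv0
  | succ n ih =>
    have := svep_orbit_step B z₀ hsv (fun k => v (n + k)) (by simpa using ih)
      (fun k => by
        have := hrec (n + k)
        rwa [show n + k + 1 = n + (k + 1) by ring] at this)
      (K * c ^ n) c hc
      (fun k => by
        calc ‖v (n + k)‖ ≤ K * c ^ (n + k) := hbound _
          _ = K * c ^ n * c ^ k := by rw [pow_add]; ring)
    simpa using this

lemma descent_A_of (A : X →L[ℂ] X) (B : Y →L[ℂ] Y) (C : Y →L[ℂ] X) (z : ℂ)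
    (hsv : HasSVEPAt B z) {d : ℕ}
    (hM : LinearMap.range ((ucMat (A - z • 1) (B - z • 1) C) ^ d).toLinearMap
      = LinearMap.range ((ucMat (A - z • 1) (B - z • 1) C) ^ (d + 1)).toLinearMap) :
    HasFiniteDescent (A - z • 1) := by
  set A₀ := A - z • 1 with hA₀
  set B₀ := B - z • 1 with hB₀
  set M₀ := ucMat A₀ B₀ C with hM₀
  obtain ⟨c, hc, homt⟩ := omt M₀ hM
  have key : ∀ x : X, (x, (0 : Y)) ∈ LinearMap.range (M₀ ^ d).toLinearMap →
      ∃ x', (x', (0 : Y)) ∈ LinearMap.range (M₀ ^ d).toLinearMap ∧ A₀ x' = x := by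
    intro x hx
    obtain ⟨w₀, hw₀⟩ := hx
    set w : ℕ → X × Y := fun n => Nat.rec w₀ (fun _ wn => Classical.choose (homt wn)) n with hw
    have hwsucc : ∀ n, (M₀ ^ (d + 1)) (w (n + 1)) = (M₀ ^ d) (w n) ∧ ‖w (n + 1)‖ ≤ c * ‖w n‖ :=
      fun n => Classical.choose_spec (homt (w n))
    have hwnorm : ∀ n, ‖w n‖ ≤ c ^ n * ‖w₀‖ := by
      intro n; induction n with
      | zero => simp [hw]
      | succ n ih =>
        calc ‖w (n + 1)‖ ≤ c * ‖w n‖ := (hwsucc n).2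
          _ ≤ c * (c ^ n * ‖w₀‖) := by
              exact mul_le_mul_of_nonneg_left ih hc.le
          _ = c ^ (n + 1) * ‖w₀‖ := by ring
    set u : ℕ → X × Y := fun n => (M₀ ^ d) (w n) with hu
    have hu0 : u 0 = (x, 0) := hw₀
    have hurec : ∀ n, M₀ (u (n + 1)) = u n := by
      intro n
      have h1 : M₀ ((M₀ ^ d) (w (n + 1))) = (M₀ ^ (d + 1)) (w (n + 1)) := by
        rw [← mul_apply_eq_comp, ← pow_succ']
      show M₀ ((M₀ ^ d) (w (n + 1))) = (M₀ ^ d) (w n)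
      rw [h1, (hwsucc n).1]
    have hunorm : ∀ n, ‖u n‖ ≤ (‖M₀ ^ d‖ * ‖w₀‖) * c ^ n := by
      intro n
      calc ‖u n‖ ≤ ‖M₀ ^ d‖ * ‖w n‖ := (M₀ ^ d).le_opNorm _
        _ ≤ ‖M₀ ^ d‖ * (c ^ n * ‖w₀‖) :=
            mul_le_mul_of_nonneg_left (hwnorm n) (norm_nonneg _)
        _ = (‖M₀ ^ d‖ * ‖w₀‖) * c ^ n := by ring
    set v : ℕ → Y := fun n => (u n).2 with hv
    have hv0 : v 0 = 0 := by rw [hv]; simp [hu0]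
    have hvrec : ∀ n, (B - z • 1) (v (n + 1)) = v n := by
      intro n
      have := congrArg Prod.snd (hurec n)
      rw [hM₀, ucMat_apply] at this
      exact this
    have hvbound : ∀ n, ‖v n‖ ≤ (‖M₀ ^ d‖ * ‖w₀‖) * c ^ n :=
      fun n => le_trans (norm_snd_le _) (hunorm n)
    have hvzero : ∀ n, v n = 0 :=
      svep_orbit_all B z hsv v hv0 hvrec _ c hc hvbound
    refine ⟨(u 1).1, ?_, ?_⟩
    · have h1 : u 1 = ((u 1).1, (0 : Y)) := Prod.ext rfl (hvzero 1)
      rw [← h1]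
      exact ⟨w 1, rfl⟩
    · have h2 := congrArg Prod.fst (hurec 0)
      rw [hM₀, ucMat_apply, hu0] at h2
      have h2' : A₀ (u 1).1 + C (v 1) = x := h2
      rw [hvzero 1, map_zero, add_zero] at h2'
      exact h2'
  have keyk : ∀ k, ∀ x : X, (x, (0 : Y)) ∈ LinearMap.range (M₀ ^ d).toLinearMap →
      ∃ x', (x', (0 : Y)) ∈ LinearMap.range (M₀ ^ d).toLinearMap ∧ (A₀ ^ k) x' = x := by
    intro k
    induction k with
    | zero => exact fun x hx => ⟨x, hx, rfl⟩
    | succ k ih =>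
      intro x hx
      obtain ⟨x₁, hx₁, hAx₁⟩ := key x hx
      obtain ⟨x₂, hx₂, hAx₂⟩ := ih x₁ hx₁
      refine ⟨x₂, hx₂, ?_⟩
      rw [pow_succ', mul_apply_eq_comp, hAx₂, hAx₁]
  refine ⟨d, le_antisymm ?_ (range_pow_succ_le _ d)⟩
  rintro u' ⟨x, rfl⟩
  have hx0 : ((A₀ ^ d) x, (0 : Y)) ∈ LinearMap.range (M₀ ^ d).toLinearMap := by
    refine ⟨(x, 0), (?_ : (M₀ ^ d) (x, 0) = _)⟩
    rw [hM₀, ucMat_pow_apply]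
    simp
  obtain ⟨x', _, hx'⟩ := keyk (d + 1) _ hx0
  exact ⟨x', hx'⟩

lemma ucMat_sub_smul (A : X →L[ℂ] X) (B : Y →L[ℂ] Y) (C : Y →L[ℂ] X) (z : ℂ) :
    ucMat A B C - z • 1 = ucMat (A - z • 1) (B - z • 1) C := by
  ext v <;>
    simp [ucMat_apply, ContinuousLinearMap.sub_apply, smul_apply, one_apply,
      Prod.smul_fst, Prod.smul_snd]

theorem stmt8 (A : X →L[ℂ] X) (B : Y →L[ℂ] Y) (C : Y →L[ℂ] X) :
    descentSpectrum (ucMat A B C) ∪ svepFail B =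
      descentSpectrum A ∪ descentSpectrum B ∪ svepFail B := by
  ext z
  by_cases hz : HasSVEPAt B z
  · have hMz : ucMat A B C - z • 1 = ucMat (A - z • 1) (B - z • 1) C := ucMat_sub_smul A B C z
    have hiff : HasFiniteDescent (ucMat A B C - z • 1) ↔
        (HasFiniteDescent (A - z • 1) ∧ HasFiniteDescent (B - z • 1)) := by
      constructor
      · rintro ⟨k, hk⟩
        rw [hMz] at hk
        exact ⟨descent_A_of A B C z hz hk, ⟨k, descent_B_le _ _ _ hk⟩⟩
      · rintro ⟨⟨p, hp⟩, ⟨q, hq⟩⟩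
        rw [hMz]
        exact descent_M_finite _ _ _ hp hq
    simp only [mem_union, descentSpectrum, svepFail, mem_setOf_eq]
    constructor
    · rintro (h | h)
      · rcases not_and_or.mp (fun hand => h (hiff.mpr hand)) with h' | h'
        · exact Or.inl (Or.inl h')
        · exact Or.inl (Or.inr h')
      · exact Or.inr h
    · rintro ((h | h) | h)
      · exact Or.inl fun hM => h (hiff.mp hM).1
      · exact Or.inl fun hM => h (hiff.mp hM).2
      · exact Or.inr h
  · simp only [mem_union, descentSpectrum, svepFail, mem_setOf_eq]
    exact ⟨fun _ => Or.inr hz, fun _ => Or.inr hz⟩
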